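/- arXiv:2401.17961 — 3 statements merged into one kernel-verified Lean document; each statement's English description precedes it below -/
import Mathlib

section
/- The triangular family is differentiable in quadratic mean: for every θ ∈ (0,1), defining the score function ℓ̇_θ(y) = −1/θ for y ∈ (0,θ] and ℓ̇_θ(y) = 1/(1−θ) for y ∈ (θ,1), one has ∫₀¹ ( √(f(y, θ+h)) − √(f(y, θ)) − (1/2)·h·ℓ̇_θ(y)·√(f(y, θ)) )² dy = o(h²) as h → 0. -/
open MeasureTheory Set

/-- Density of the triangular distribution on (0,1) with parameter θ. -/
noncomputable def triDensity (θ y : ℝ) : ℝ :=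
  Set.indicator (Set.Ioc 0 θ) (fun y => 2 * y / θ) y
    + Set.indicator (Set.Ioo θ 1) (fun y => (2 - 2 * y) / (1 - θ)) y

/-- Score function of the triangular family. -/
noncomputable def triScore (θ y : ℝ) : ℝ :=
  if y ≤ θ then -1 / θ else 1 / (1 - θ)

lemma sqrt_taylor_bound {c t : ℝ} (hc0 : 0 < c) (hc1 : c ≤ 1) (ht1 : c/2 ≤ t) (ht2 : t ≤ c + c/2) :
    |1/Real.sqrt t - 1/Real.sqrt c + (t - c)/(2*c*Real.sqrt c)| ≤ 8*(t-c)^2/c^3 := by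
  have ht0 : 0 < t := lt_of_lt_of_le (half_pos hc0) ht1
  set a := Real.sqrt c with ha_def
  set b := Real.sqrt t with hb_def
  have ha2 : a^2 = c := Real.sq_sqrt hc0.le
  have hb2 : b^2 = t := Real.sq_sqrt ht0.le
  have ha0 : 0 < a := Real.sqrt_pos.2 hc0
  have hb0 : 0 < b := Real.sqrt_pos.2 ht0
  have hble : b ≤ 2*a := by nlinarith
  have hbge : a/2 ≤ b := by nlinarith
  have ha1 : a ≤ 1 := by nlinarith
  have key : 1/b - 1/a + (t - c)/(2*c*a) = (a-b)^2*(2*a+b)/(2*a^3*b) := by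
    rw [← ha2, ← hb2]; field_simp; ring
  rw [key, abs_of_nonneg (by positivity)]
  have h1 : (t - c)^2 = (a-b)^2 * (a+b)^2 := by rw [← ha2, ← hb2]; ring
  rw [h1, ← ha2]
  rw [div_le_div_iff₀ (by positivity) (by positivity)]
  have hfac : (2*a+b)*a^3 ≤ 16*((a+b)^2*b) := by
    have ha3 : (0:ℝ) ≤ a^3 := by positivity
    have s1 : (2*a+b)*a^3 ≤ (4*a)*a^3 := mul_le_mul_of_nonneg_right (by linarith) ha3
    have s2 : (4*a)*a^3 ≤ 4*a^3 := by nlinarith [pow_pos ha0 3]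
    have s3 : 8*(a^2*b) ≤ 16*((a+b)^2*b) := by nlinarith [sq_nonneg (a+b), mul_pos ha0 hb0, sq_nonneg a]
    have s4 : 4*a^3 ≤ 8*(a^2*b) := by nlinarith [sq_nonneg a, mul_pos ha0 ha0]
    linarith
  calc (a-b)^2*(2*a+b) * (a^2)^3 = ((a-b)^2*a^3) * ((2*a+b)*a^3) := by ring
    _ ≤ ((a-b)^2*a^3) * (16*((a+b)^2*b)) := by
        apply mul_le_mul_of_nonneg_left hfac (by positivity)
    _ = 8*((a-b)^2*(a+b)^2) * (2*a^3*b) := by ring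

lemma abs_sqrt_sub_sqrt_two {u : ℝ} (hu : 0 ≤ u) : |Real.sqrt u - Real.sqrt 2| ≤ |u - 2| := by
  have h1 : Real.sqrt u ^2 = u := Real.sq_sqrt hu
  have h2 : Real.sqrt 2 ^2 = 2 := Real.sq_sqrt (by norm_num)
  have h3 : (1:ℝ) ≤ Real.sqrt 2 := by nlinarith [Real.sqrt_nonneg 2]
  have h4 : 0 ≤ Real.sqrt u := Real.sqrt_nonneg u
  cases' abs_cases (Real.sqrt u - Real.sqrt 2) with hc hc <;>
    cases' abs_cases (u - 2) with hd hd <;> nlinarith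

lemma sqrt_le_two {u : ℝ} (hu : u ≤ 4) : Real.sqrt u ≤ 2 := by
  have : Real.sqrt u ≤ Real.sqrt 4 := Real.sqrt_le_sqrt (by linarith)
  have h4 : Real.sqrt 4 = 2 := by
    rw [show (4:ℝ) = 2^2 by norm_num, Real.sqrt_sq (by norm_num)]
  linarith

lemma triDensity_left {t y : ℝ} (ht : 0 < t) (hy0 : 0 ≤ y) (hyt : y ≤ t) :
    triDensity t y = 2*y/t := by
  unfold triDensity
  rw [Set.indicator_of_notMem (fun hc : y ∈ Set.Ioo t 1 => absurd hc.1 (not_lt.2 hyt))]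
  rcases eq_or_lt_of_le hy0 with h0 | h0
  · rw [Set.indicator_of_notMem (fun hc : y ∈ Set.Ioc 0 t => absurd hc.1 (not_lt.2 h0.ge))]
    rw [← h0]; simp
  · rw [Set.indicator_of_mem (Set.mem_Ioc.mpr ⟨h0, hyt⟩)]; ring

lemma triDensity_right {t y : ℝ} (ht : 0 < t) (ht1 : t < 1) (hty : t ≤ y) (hy1 : y ≤ 1) :
    triDensity t y = (2-2*y)/(1-t) := by
  unfold triDensity
  rcases eq_or_lt_of_le hty with h0 | h0
  · rw [Set.indicator_of_mem (Set.mem_Ioc.mpr ⟨by linarith, h0.ge⟩),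
      Set.indicator_of_notMem (fun hc : y ∈ Set.Ioo t 1 => absurd hc.1 (not_lt.2 h0.ge))]
    rw [← h0, add_zero, div_eq_div_iff (by linarith) (by linarith)]
    ring
  · rw [Set.indicator_of_notMem (fun hc : y ∈ Set.Ioc 0 t => absurd h0 (not_lt.2 hc.2))]
    rcases eq_or_lt_of_le hy1 with h1 | h1
    · rw [Set.indicator_of_notMem (fun hc : y ∈ Set.Ioo t 1 => absurd h1 (ne_of_lt hc.2))]
      rw [h1]; norm_num
    · rw [Set.indicator_of_mem (Set.mem_Ioo.mpr ⟨h0, h1⟩)]; ring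

lemma triDensity_nonneg {t y : ℝ} (ht : 0 < t) (ht1 : t < 1) : 0 ≤ triDensity t y := by
  unfold triDensity
  apply add_nonneg
  · apply Set.indicator_nonneg; intro x hx; have := hx.1; positivity
  · apply Set.indicator_nonneg; intro x hx
    have h1 := hx.2
    have h2 : (0:ℝ) ≤ 2 - 2*x := by linarith
    exact div_nonneg h2 (by linarith)

lemma triDensity_le_two {t y : ℝ} (ht : 0 < t) (ht1 : t < 1) : triDensity t y ≤ 4 := by
  unfold triDensity
  rw [Set.indicator_apply, Set.indicator_apply]
  have e1 : y ∈ Set.Ioc 0 t → 2*y/t ≤ 2 := fun h => by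
    rw [div_le_iff₀ ht]; have := h.2; linarith
  have e2 : y ∈ Set.Ioo t 1 → (2-2*y)/(1-t) ≤ 2 := fun h => by
    rw [div_le_iff₀ (by linarith : (0:ℝ) < 1-t)]; have := h.1; linarith
  split_ifs with h1 h2 h2
  · have := e1 h1; have := e2 h2; linarith
  · have := e1 h1; linarith
  · have := e2 h2; linarith
  · norm_num

lemma abs_triScore_le {t y : ℝ} (ht : 0 < t) (ht1 : t < 1) :
    |triScore t y| ≤ 1/t + 1/(1-t) := by
  unfold triScore
  have h1 : (0:ℝ) < 1 - t := by linarith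
  split_ifs with h
  · rw [show -1/t = -(1/t) by ring, abs_neg, abs_of_nonneg (by positivity)]
    have : (0:ℝ) ≤ 1/(1-t) := by positivity
    linarith
  · rw [abs_of_nonneg (by positivity)]
    have : (0:ℝ) ≤ 1/t := by positivity
    linarith

lemma triDensity_measurable (t : ℝ) : Measurable (triDensity t) := by
  unfold triDensity
  exact ((measurable_const.mul measurable_id).div_const t).indicator measurableSet_Ioc
    |>.add (((measurable_const.sub (measurable_const.mul measurable_id)).div_const (1-t)).indicator measurableSet_Ioo)

lemma triScore_measurable (t : ℝ) : Measurable (triScore t) := by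
  unfold triScore
  exact Measurable.ite measurableSet_Iic measurable_const measurable_const

lemma region1 {θ h y : ℝ} (hθ0 : 0 < θ) (hθ1 : θ < 1) (hh : |h| ≤ min θ (1-θ)/2)
    (hy0 : 0 ≤ y) (hy1 : y ≤ min θ (θ+h)) :
    (Real.sqrt (triDensity (θ+h) y) - Real.sqrt (triDensity θ y)
      - (1/2)*h*triScore θ y*Real.sqrt (triDensity θ y))^2 ≤ 128/θ^6 * h^4 := by
  have hmθ : min θ (1-θ) ≤ θ := min_le_left _ _
  have habs := abs_le.1 hh
  have hθh0 : 0 < θ + h := by linarith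
  have hθh2 : θ + h ≤ θ + θ/2 := by linarith
  have hyθ : y ≤ θ := le_trans hy1 (min_le_left _ _)
  have hyθh : y ≤ θ + h := le_trans hy1 (min_le_right _ _)
  have h2y : (0:ℝ) ≤ 2*y := by linarith
  rw [triDensity_left hθ0 hy0 hyθ, triDensity_left hθh0 hy0 hyθh,
    show triScore θ y = -1/θ from if_pos hyθ,
    show 2*y/θ = 2*y/θ from rfl]
  rw [Real.sqrt_div h2y θ, Real.sqrt_div h2y (θ+h)]
  set s := Real.sqrt (2*y) with hs
  set A := Real.sqrt θ with hA
  set B := Real.sqrt (θ+h) with hB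
  have hA0 : 0 < A := Real.sqrt_pos.2 hθ0
  have hB0 : 0 < B := Real.sqrt_pos.2 hθh0
  have hE := sqrt_taylor_bound hθ0 hθ1.le (by linarith : θ/2 ≤ θ+h) (by linarith)
  rw [← hA, ← hB, show θ + h - θ = h from by ring] at hE
  set E := 1/B - 1/A + h/(2*θ*A) with hE_def
  have hfac : s/B - s/A - 1/2*h*(-1/θ)*(s/A) = s * E := by
    rw [hE_def]; field_simp; ring
  have hEabs := abs_le.1 hE
  have hs2 : s^2 = 2*y := Real.sq_sqrt h2y
  have hKnn : (0:ℝ) ≤ 8*h^2/θ^3 := by positivity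
  calc (s/B - s/A - 1/2*h*(-1/θ)*(s/A))^2 = (2*y) * E^2 := by
        rw [hfac, mul_pow, hs2]
    _ ≤ 2 * E^2 := mul_le_mul_of_nonneg_right (by linarith) (sq_nonneg E)
    _ ≤ 2 * (8*h^2/θ^3)^2 := by
        have := sq_le_sq' (by linarith [hEabs.1] : -(8*h^2/θ^3) ≤ E) hEabs.2
        linarith
    _ = 128/θ^6 * h^4 := by field_simp; ring

lemma region3 {θ h y : ℝ} (hθ0 : 0 < θ) (hθ1 : θ < 1) (hh : |h| ≤ min θ (1-θ)/2)
    (hy0 : max θ (θ+h) ≤ y) (hy1 : y ≤ 1) (hyθ : θ < y) :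
    (Real.sqrt (triDensity (θ+h) y) - Real.sqrt (triDensity θ y)
      - (1/2)*h*triScore θ y*Real.sqrt (triDensity θ y))^2 ≤ 128/(1-θ)^6 * h^4 := by
  have hmθ : min θ (1-θ) ≤ θ := min_le_left _ _
  have hmθ' : min θ (1-θ) ≤ 1-θ := min_le_right _ _
  have habs := abs_le.1 hh
  have hθh0 : 0 < θ + h := by linarith
  have hθh1 : θ + h < 1 := by linarith
  have hyθh : θ + h ≤ y := le_trans (le_max_right _ _) hy0
  have h2y : (0:ℝ) ≤ 2 - 2*y := by linarith
  rw [triDensity_right hθ0 hθ1 hyθ.le hy1, triDensity_right hθh0 hθh1 hyθh hy1,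
    show triScore θ y = 1/(1-θ) from if_neg (not_le.2 hyθ)]
  rw [Real.sqrt_div h2y (1-θ), Real.sqrt_div h2y (1-(θ+h))]
  set s := Real.sqrt (2-2*y) with hs
  set A := Real.sqrt (1-θ) with hA
  set B := Real.sqrt (1-(θ+h)) with hB
  have hA0 : 0 < A := Real.sqrt_pos.2 (by linarith)
  have hB0 : 0 < B := Real.sqrt_pos.2 (by linarith)
  have hθ1' : (0:ℝ) < 1 - θ := by linarith
  have hE := sqrt_taylor_bound (c := 1-θ) (t := 1-(θ+h)) hθ1' (by linarith)
    (by linarith) (by linarith)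
  rw [← hA, ← hB, show 1-(θ+h) - (1-θ) = -h from by ring] at hE
  rw [show (8:ℝ)*(-h)^2/(1-θ)^3 = 8*h^2/(1-θ)^3 from by ring] at hE
  set E := 1/B - 1/A + (-h)/(2*(1-θ)*A) with hE_def
  have hfac : s/B - s/A - 1/2*h*(1/(1-θ))*(s/A) = s * E := by
    rw [hE_def]; field_simp; ring
  have hEabs := abs_le.1 hE
  have hs2 : s^2 = 2-2*y := Real.sq_sqrt h2y
  calc (s/B - s/A - 1/2*h*(1/(1-θ))*(s/A))^2 = (2-2*y) * E^2 := by
        rw [hfac, mul_pow, hs2]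
    _ ≤ 2 * E^2 := mul_le_mul_of_nonneg_right (by linarith) (sq_nonneg E)
    _ ≤ 2 * (8*h^2/(1-θ)^3)^2 := by
        have := sq_le_sq' (by linarith [hEabs.1] : -(8*h^2/(1-θ)^3) ≤ E) hEabs.2
        linarith
    _ = 128/(1-θ)^6 * h^4 := by field_simp; ring

lemma region2 {θ h y : ℝ} (hθ0 : 0 < θ) (hθ1 : θ < 1) (hh : |h| ≤ min θ (1-θ)/2)
    (hy0 : min θ (θ+h) ≤ y) (hy1 : y ≤ max θ (θ+h)) :
    (Real.sqrt (triDensity (θ+h) y) - Real.sqrt (triDensity θ y)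
      - (1/2)*h*triScore θ y*Real.sqrt (triDensity θ y))^2
      ≤ 36/(min θ (1-θ))^2 * h^2 := by
  set m := min θ (1-θ) with hm
  have hmθ : m ≤ θ := min_le_left _ _
  have hmθ' : m ≤ 1-θ := min_le_right _ _
  have hm0 : 0 < m := lt_min hθ0 (by linarith)
  clear_value m
  have habs := abs_le.1 hh
  have hθh0 : 0 < θ + h := by linarith
  have hθh1 : θ + h < 1 := by linarith
  have hb0 : |triDensity θ y - 2| ≤ 2*|h|/m := by
    rcases le_total 0 h with hp | hn
    · rw [min_eq_left (by linarith : θ ≤ θ+h)] at hy0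
      rw [max_eq_right (by linarith : θ ≤ θ+h)] at hy1
      have hd : triDensity θ y - 2 = 2*(θ-y)/(1-θ) := by
        have hne : (1:ℝ)-θ ≠ 0 := by linarith
        rw [triDensity_right hθ0 hθ1 hy0 (by linarith)]
        field_simp; ring
      rw [hd, abs_div]
      apply div_le_div₀ (by positivity) ?_ hm0 ?_
      · rw [abs_of_nonpos (by linarith), abs_of_nonneg hp]; linarith
      · rw [abs_of_nonneg (by linarith)]; linarith
    · rw [min_eq_right (by linarith : θ+h ≤ θ)] at hy0
      rw [max_eq_left (by linarith : θ+h ≤ θ)] at hy1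
      have hd : triDensity θ y - 2 = 2*(y-θ)/θ := by
        have hne : θ ≠ 0 := ne_of_gt hθ0
        rw [triDensity_left hθ0 (by linarith) hy1]
        field_simp
      rw [hd, abs_div]
      apply div_le_div₀ (by positivity) ?_ hm0 ?_
      · rw [abs_of_nonpos (by linarith), abs_of_nonpos hn]; linarith
      · rw [abs_of_nonneg (by linarith)]; linarith
  have hb1 : |triDensity (θ+h) y - 2| ≤ 2*|h|/m := by
    rcases le_total 0 h with hp | hn
    · rw [min_eq_left (by linarith : θ ≤ θ+h)] at hy0
      rw [max_eq_right (by linarith : θ ≤ θ+h)] at hy1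
      have hd : triDensity (θ+h) y - 2 = 2*(y-(θ+h))/(θ+h) := by
        have hne : θ+h ≠ 0 := ne_of_gt hθh0
        rw [triDensity_left hθh0 (by linarith) hy1]
        field_simp
      rw [hd, abs_div]
      apply div_le_div₀ (by positivity) ?_ hm0 ?_
      · rw [abs_of_nonpos (by linarith), abs_of_nonneg hp]; linarith
      · rw [abs_of_nonneg (by linarith)]; linarith
    · rw [min_eq_right (by linarith : θ+h ≤ θ)] at hy0
      rw [max_eq_left (by linarith : θ+h ≤ θ)] at hy1
      have hd : triDensity (θ+h) y - 2 = 2*((θ+h)-y)/(1-(θ+h)) := by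
        have hne : 1-(θ+h) ≠ 0 := by intro hc; rw [sub_eq_zero] at hc; linarith
        rw [triDensity_right hθh0 hθh1 hy0 (by linarith)]
        field_simp; ring
      rw [hd, abs_div]
      apply div_le_div₀ (by positivity) ?_ hm0 ?_
      · rw [abs_of_nonpos (by linarith), abs_of_nonpos hn]; linarith
      · rw [abs_of_nonneg (by linarith)]; linarith
  have hu0 : 0 ≤ triDensity (θ+h) y := triDensity_nonneg hθh0 hθh1
  have hv0 : 0 ≤ triDensity θ y := triDensity_nonneg hθ0 hθ1
  have e1 := abs_sqrt_sub_sqrt_two hu0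
  have e2 := abs_sqrt_sub_sqrt_two hv0
  have e3 : Real.sqrt (triDensity θ y) ≤ 2 := sqrt_le_two (triDensity_le_two hθ0 hθ1)
  have e4 : |triScore θ y| ≤ 2/m := by
    refine le_trans (abs_triScore_le hθ0 hθ1) ?_
    have i1 : 1/θ ≤ 1/m := one_div_le_one_div_of_le hm0 hmθ
    have i2 : 1/(1-θ) ≤ 1/m := one_div_le_one_div_of_le hm0 hmθ'
    have : 2/m = 1/m + 1/m := by ring
    linarith
  set u := triDensity (θ+h) y
  set v := triDensity θ y
  set S := triScore θ y
  clear_value u v S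
  have b1 : |Real.sqrt u - Real.sqrt 2| ≤ 2*|h|/m := le_trans e1 hb1
  have b2 : |Real.sqrt v - Real.sqrt 2| ≤ 2*|h|/m := le_trans e2 hb0
  have b3 : |1/2*h*S*Real.sqrt v| ≤ 2*|h|/m := by
    rw [abs_mul, abs_mul, abs_mul, abs_of_nonneg (Real.sqrt_nonneg v),
      show |(1:ℝ)/2| = 1/2 by norm_num]
    have h1 : |h| * |S| ≤ |h| * (2/m) := mul_le_mul_of_nonneg_left e4 (abs_nonneg h)
    have h2 : (|h| * |S|) * Real.sqrt v ≤ (|h| * (2/m)) * 2 :=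
      mul_le_mul h1 e3 (Real.sqrt_nonneg v) (by positivity)
    have h3 : 1/2*h*S = 1/2*(h*S) := by ring
    calc 1/2*|h| * |S| * Real.sqrt v = 1/2*((|h| * |S|) * Real.sqrt v) := by ring
      _ ≤ 1/2*((|h| * (2/m)) * 2) := by linarith
      _ = 2*|h|/m := by ring
  have c1 := abs_le.1 b1
  have c2 := abs_le.1 b2
  have c3 := abs_le.1 b3
  have hsum : |Real.sqrt u - Real.sqrt v - 1/2*h*S*Real.sqrt v|
      ≤ 2*|h|/m + 2*|h|/m + 2*|h|/m := by
    rw [abs_le]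
    constructor <;> linarith [c1.1, c1.2, c2.1, c2.2, c3.1, c3.2]
  have hD : |Real.sqrt u - Real.sqrt v - 1/2*h*S*Real.sqrt v| ≤ 6*|h|/m :=
    hsum.trans (le_of_eq (by ring))
  have hDabs := abs_le.1 hD
  have hsq : (Real.sqrt u - Real.sqrt v - 1/2*h*S*Real.sqrt v)^2 ≤ (6*|h|/m)^2 :=
    sq_le_sq' (by linarith [hDabs.1]) hDabs.2
  have heq : (6*|h|/m)^2 = 36/m^2 * h^2 := by
    rw [show (6*|h|/m)^2 = 36*|h|^2/m^2 by ring, sq_abs]; ring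
  calc (Real.sqrt u - Real.sqrt v - 1/2*h*S*Real.sqrt v)^2 ≤ (6*|h|/m)^2 := hsq
    _ = 36/m^2 * h^2 := heq

set_option maxHeartbeats 1000000 in
lemma tri_main_bound (θ : ℝ) (hθ0 : 0 < θ) (hθ1 : θ < 1) (h : ℝ)
    (hh : |h| ≤ min θ (1-θ)/2) :
    |∫ y in (0:ℝ)..1, (Real.sqrt (triDensity (θ+h) y) - Real.sqrt (triDensity θ y)
       - (1/2)*h*triScore θ y*Real.sqrt (triDensity θ y))^2|
    ≤ (128/θ^6 + 128/(1-θ)^6 + 36/(min θ (1-θ))^2) * |h|^3 := by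
  have hmθ : min θ (1-θ) ≤ θ := min_le_left _ _
  have hmθ' : min θ (1-θ) ≤ 1-θ := min_le_right _ _
  have hm0 : 0 < min θ (1-θ) := lt_min hθ0 (by linarith)
  have habs := abs_le.1 hh
  have hθh0 : 0 < θ + h := by linarith
  have hθh1 : θ + h < 1 := by linarith
  set g : ℝ → ℝ := fun y => (Real.sqrt (triDensity (θ+h) y) - Real.sqrt (triDensity θ y)
       - (1/2)*h*triScore θ y*Real.sqrt (triDensity θ y))^2 with hg
  -- integrability on [0,1]
  have hgmeas : Measurable g := by
    apply Measurable.pow_const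
    exact ((Real.continuous_sqrt.measurable.comp (triDensity_measurable (θ+h))).sub
      (Real.continuous_sqrt.measurable.comp (triDensity_measurable θ))).sub
      (((measurable_const.mul (triScore_measurable θ)).mul
        (Real.continuous_sqrt.measurable.comp (triDensity_measurable θ))))
  have hgnn : ∀ y, 0 ≤ g y := fun y => sq_nonneg _
  have hgbd : ∀ y, g y ≤ (4 + 1/θ + 1/(1-θ))^2 := by
    intro y
    have s1 : Real.sqrt (triDensity (θ+h) y) ≤ 2 := sqrt_le_two (triDensity_le_two hθh0 hθh1)
    have s2 : Real.sqrt (triDensity θ y) ≤ 2 := sqrt_le_two (triDensity_le_two hθ0 hθ1)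
    have s3 := abs_triScore_le (y := y) hθ0 hθ1
    have s0 : 0 ≤ Real.sqrt (triDensity (θ+h) y) := Real.sqrt_nonneg _
    have s0' : 0 ≤ Real.sqrt (triDensity θ y) := Real.sqrt_nonneg _
    have hh1 : |h| ≤ 1 := by
      have : min θ (1-θ) ≤ 1 := by linarith
      linarith
    have habs3 : |(1/2)*h*triScore θ y*Real.sqrt (triDensity θ y)| ≤ 1/θ + 1/(1-θ) := by
      rw [abs_mul, abs_mul, abs_mul, abs_of_nonneg s0', show |(1:ℝ)/2| = 1/2 by norm_num]
      have p1 : |h| * |triScore θ y| ≤ 1 * (1/θ + 1/(1-θ)) :=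
        mul_le_mul hh1 s3 (abs_nonneg _) (by norm_num)
      have p2 : (|h| * |triScore θ y|) * Real.sqrt (triDensity θ y)
          ≤ (1 * (1/θ + 1/(1-θ))) * 2 := by
        have hp0 : (0:ℝ) < 1-θ := by linarith
        apply mul_le_mul p1 s2 s0' (by positivity)
      calc 1/2*|h| * |triScore θ y| * Real.sqrt (triDensity θ y)
          = 1/2*((|h| * |triScore θ y|) * Real.sqrt (triDensity θ y)) := by ring
        _ ≤ 1/2*((1 * (1/θ + 1/(1-θ))) * 2) := by linarith
        _ = 1/θ + 1/(1-θ) := by ring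
    have hd := abs_le.1 habs3
    rw [hg]
    have hE : |Real.sqrt (triDensity (θ+h) y) - Real.sqrt (triDensity θ y)
       - (1/2)*h*triScore θ y*Real.sqrt (triDensity θ y)| ≤ 4 + 1/θ + 1/(1-θ)  := by
      rw [abs_le]; constructor <;> [linarith [hd.1]; linarith [hd.2]]
    have := abs_le.1 hE
    exact sq_le_sq' (by linarith [this.1]) this.2
  have hInt01 : IntervalIntegrable g volume 0 1 := by
    rw [intervalIntegrable_iff]
    apply MeasureTheory.Integrable.mono' (g := fun _ => (4 + 1/θ + 1/(1-θ))^2)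
    · exact integrableOn_const (by rw [Set.uIoc_of_le zero_le_one]; exact measure_Ioc_lt_top.ne)
    · exact hgmeas.aestronglyMeasurable.restrict
    · exact Filter.Eventually.of_forall fun y => by
        rw [Real.norm_eq_abs, abs_of_nonneg (hgnn y)]; exact hgbd y
  set m1 := min θ (θ+h) with hm1
  set m2 := max θ (θ+h) with hm2
  have hm10 : 0 ≤ m1 := le_min hθ0.le hθh0.le
  have hm12 : m1 ≤ m2 := min_le_max
  have hm21 : m2 ≤ 1 := max_le hθ1.le hθh1.le
  have hmem : ∀ x : ℝ, 0 ≤ x → x ≤ 1 → x ∈ Set.uIcc (0:ℝ) 1 := fun x h1 h2 => by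
    rw [Set.uIcc_of_le zero_le_one]; exact ⟨h1, h2⟩
  have i1 : IntervalIntegrable g volume 0 m1 :=
    hInt01.mono_set (Set.uIcc_subset_uIcc (hmem 0 le_rfl zero_le_one) (hmem m1 hm10 (hm12.trans hm21)))
  have i2 : IntervalIntegrable g volume m1 m2 :=
    hInt01.mono_set (Set.uIcc_subset_uIcc (hmem m1 hm10 (hm12.trans hm21)) (hmem m2 (hm10.trans hm12) hm21))
  have i3 : IntervalIntegrable g volume m2 1 :=
    hInt01.mono_set (Set.uIcc_subset_uIcc (hmem m2 (hm10.trans hm12) hm21) (hmem 1 zero_le_one le_rfl))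
  have hsplit : ∫ y in (0:ℝ)..1, g y
      = (∫ y in (0:ℝ)..m1, g y) + (∫ y in m1..m2, g y) + (∫ y in m2..(1:ℝ), g y) := by
    rw [intervalIntegral.integral_add_adjacent_intervals i1 i2,
      intervalIntegral.integral_add_adjacent_intervals (i1.trans i2) i3]
  -- bounds
  have K1nn : (0:ℝ) ≤ 128/θ^6 * h^4 := by positivity
  have K2nn : (0:ℝ) ≤ 36/(min θ (1-θ))^2 * h^2 := by positivity
  have K3nn : (0:ℝ) ≤ 128/(1-θ)^6 * h^4 := by positivity
  have B1 : (∫ y in (0:ℝ)..m1, g y) ≤ 128/θ^6 * h^4 := by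
    have := intervalIntegral.integral_mono_on hm10 i1 intervalIntegrable_const
      (fun x hx => region1 hθ0 hθ1 hh hx.1 hx.2)
    rw [intervalIntegral.integral_const, smul_eq_mul] at this
    have hm11 : m1 ≤ 1 := hm12.trans hm21
    nlinarith
  have B2 : (∫ y in m1..m2, g y) ≤ |h| * (36/(min θ (1-θ))^2 * h^2) := by
    have hmono := intervalIntegral.integral_mono_on hm12 i2 intervalIntegrable_const
      (fun x hx => region2 hθ0 hθ1 hh hx.1 hx.2)
    rw [intervalIntegral.integral_const, smul_eq_mul] at hmono
    have hdiff : m2 - m1 = |h| := by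
      rcases le_total 0 h with hp | hn
      · rw [hm1, hm2, min_eq_left (by linarith : θ ≤ θ+h),
          max_eq_right (by linarith : θ ≤ θ+h), abs_of_nonneg hp]; ring
      · rw [hm1, hm2, min_eq_right (by linarith : θ+h ≤ θ),
          max_eq_left (by linarith : θ+h ≤ θ), abs_of_nonpos hn]; ring
    rw [hdiff] at hmono
    exact hmono
  have B3 : (∫ y in m2..(1:ℝ), g y) ≤ 128/(1-θ)^6 * h^4 := by
    have hae : g ≤ᵐ[volume.restrict (Set.Icc m2 1)] fun _ => 128/(1-θ)^6 * h^4 := by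
      have hne : ∀ᵐ (y:ℝ) ∂volume, y ≠ θ := by
        rw [MeasureTheory.ae_iff]
        apply MeasureTheory.measure_mono_null (fun a ha => by simpa using ha : {a : ℝ | ¬ a ≠ θ} ⊆ {θ})
        exact Real.volume_singleton
      filter_upwards [MeasureTheory.ae_restrict_of_ae hne,
        MeasureTheory.ae_restrict_mem measurableSet_Icc] with y hyne hmem
      have hθy : θ ≤ y := le_trans (le_max_left _ _) hmem.1
      exact region3 hθ0 hθ1 hh hmem.1 hmem.2 (lt_of_le_of_ne hθy (Ne.symm hyne))
    have hmono := intervalIntegral.integral_mono_ae_restrict hm21 i3 intervalIntegrable_const hae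
    rw [intervalIntegral.integral_const, smul_eq_mul] at hmono
    nlinarith [hm10.trans hm12]
  have hFnn : 0 ≤ ∫ y in (0:ℝ)..1, g y :=
    intervalIntegral.integral_nonneg zero_le_one (fun u _ => hgnn u)
  rw [abs_of_nonneg hFnn, hsplit]
  have hh1 : |h| ≤ 1 := by
    have : min θ (1-θ) ≤ 1 := by linarith
    linarith
  have hh0 : 0 ≤ |h| := abs_nonneg h
  have h4 : h^4 ≤ |h|^3 := by
    have e : h^4 = |h|^3 * |h| := by
      rw [show |h|^3 * |h| = |h|^4 from by ring, ← abs_pow, abs_of_nonneg (by positivity)]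
    rw [e]
    nlinarith [pow_nonneg hh0 3]
  have h2 : |h| * h^2 = |h|^3 := by
    rw [show |h|^3 = |h| * |h|^2 from by ring, sq_abs]
  have c1 : 128/θ^6 * h^4 ≤ 128/θ^6 * |h|^3 :=
    mul_le_mul_of_nonneg_left h4 (by positivity)
  have c3 : 128/(1-θ)^6 * h^4 ≤ 128/(1-θ)^6 * |h|^3 := by
    have hp0 : (0:ℝ) < 1-θ := by linarith
    exact mul_le_mul_of_nonneg_left h4 (by positivity)
  have c2 : |h| * (36/(min θ (1-θ))^2 * h^2) = 36/(min θ (1-θ))^2 * |h|^3 := by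
    rw [← h2]; ring
  calc (∫ y in (0:ℝ)..m1, g y) + (∫ y in m1..m2, g y) + (∫ y in m2..(1:ℝ), g y)
      ≤ 128/θ^6 * h^4 + |h| * (36/(min θ (1-θ))^2 * h^2) + 128/(1-θ)^6 * h^4 := by
        linarith
    _ ≤ 128/θ^6 * |h|^3 + 36/(min θ (1-θ))^2 * |h|^3 + 128/(1-θ)^6 * |h|^3 := by
        rw [c2]; linarith
    _ = (128/θ^6 + 128/(1-θ)^6 + 36/(min θ (1-θ))^2) * |h|^3 := by ring

/-- The triangular family is differentiable in quadratic mean: the quadratic-mean Taylor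
remainder is `o(h²)` as `h → 0`. -/
theorem triangular_dqm (θ : ℝ) (hθ : θ ∈ Set.Ioo (0 : ℝ) 1) :
    (fun h : ℝ => ∫ y in (0 : ℝ)..1,
        (Real.sqrt (triDensity (θ + h) y) - Real.sqrt (triDensity θ y)
          - (1 / 2) * h * triScore θ y * Real.sqrt (triDensity θ y)) ^ 2)
      =o[nhds (0 : ℝ)] (fun h : ℝ => h ^ 2) := by
  obtain ⟨hθ0, hθ1⟩ := hθ
  have hmin0 : 0 < min θ (1-θ)/2 := by
    have : 0 < min θ (1-θ) := lt_min hθ0 (by linarith)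
    linarith
  have hbig : (fun h : ℝ => ∫ y in (0 : ℝ)..1,
        (Real.sqrt (triDensity (θ + h) y) - Real.sqrt (triDensity θ y)
          - (1 / 2) * h * triScore θ y * Real.sqrt (triDensity θ y)) ^ 2)
      =O[nhds (0:ℝ)] (fun h : ℝ => |h|^3) := by
    rw [Asymptotics.isBigO_iff]
    refine ⟨128/θ^6 + 128/(1-θ)^6 + 36/(min θ (1-θ))^2, ?_⟩
    filter_upwards [Metric.ball_mem_nhds (0:ℝ) hmin0] with h hh
    rw [Metric.mem_ball, Real.dist_eq, sub_zero] at hh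
    rw [Real.norm_eq_abs, Real.norm_eq_abs,
      abs_of_nonneg (by positivity : (0:ℝ) ≤ |h|^3)]
    exact tri_main_bound θ hθ0 hθ1 h hh.le
  have hlo : (fun h:ℝ => |h|^3) =o[nhds (0:ℝ)] (fun h : ℝ => h^2) := by
    rw [Asymptotics.isLittleO_iff]
    intro c hc
    filter_upwards [Metric.ball_mem_nhds (0:ℝ) hc] with h hh
    rw [Metric.mem_ball, Real.dist_eq, sub_zero] at hh
    rw [Real.norm_eq_abs, Real.norm_eq_abs, abs_of_nonneg (by positivity : (0:ℝ) ≤ |h|^3),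
      abs_of_nonneg (sq_nonneg h), show |h|^3 = |h| * |h|^2 from by ring, sq_abs]
    exact mul_le_mul_of_nonneg_right hh.le (sq_nonneg h)
  exact hbig.trans_isLittleO hlo
end

section
/- For fixed y ∈ (0,1) and u ∈ (0,1), the equation G(u,θ) = y in θ ∈ (0,1) has the following solution set: if u < y², there is no solution; if y² ≤ u < y, the unique solution is θ = y²/u; if y ≤ u ≤ 1 − (1−y)², the unique solution is θ = 1 − (1−y)²/(1−u); and if u > 1 − (1−y)², there is no solution. -/
open Set

/-- Data generating algorithm for the triangular distribution. -/
noncomputable def triDGA (u θ : ℝ) : ℝ :=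
  if u ≤ θ then Real.sqrt (u * θ) else 1 - Real.sqrt ((1 - u) * (1 - θ))

private lemma sqrt_eq_of (x y : ℝ) (hx : 0 ≤ x) (h : Real.sqrt x = y) : x = y ^ 2 := by
  rw [← h]; exact (Real.sq_sqrt hx).symm

/-- Solution set of the equation `G(u,θ) = y` in `θ ∈ (0,1)`, for fixed
`y, u ∈ (0,1)`: no solution if `u < y²`; the unique solution `θ = y²/u` if
`y² ≤ u < y`; the unique solution `θ = 1 - (1-y)²/(1-u)` if `y ≤ u ≤ 1-(1-y)²`;
and no solution if `u > 1-(1-y)²`. -/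
theorem triangular_dga_inverse (y u : ℝ) (hy : y ∈ Set.Ioo (0 : ℝ) 1)
    (hu : u ∈ Set.Ioo (0 : ℝ) 1) :
    (u < y ^ 2 → ¬ ∃ θ ∈ Set.Ioo (0 : ℝ) 1, triDGA u θ = y)
    ∧ (y ^ 2 ≤ u → u < y →
        ∀ θ ∈ Set.Ioo (0 : ℝ) 1, (triDGA u θ = y ↔ θ = y ^ 2 / u))
    ∧ (y ≤ u → u ≤ 1 - (1 - y) ^ 2 →
        ∀ θ ∈ Set.Ioo (0 : ℝ) 1, (triDGA u θ = y ↔ θ = 1 - (1 - y) ^ 2 / (1 - u)))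
    ∧ (1 - (1 - y) ^ 2 < u → ¬ ∃ θ ∈ Set.Ioo (0 : ℝ) 1, triDGA u θ = y) := by
  obtain ⟨hy0, hy1⟩ := hy
  obtain ⟨hu0, hu1⟩ := hu
  refine ⟨?_, ?_, ?_, ?_⟩
  · -- u < y² : no solution
    rintro h ⟨θ, ⟨hθ0, hθ1⟩, hG⟩
    unfold triDGA at hG
    split_ifs at hG with huθ
    · have h1 : u * θ = y ^ 2 := sqrt_eq_of _ _ (by positivity) hG
      nlinarith
    · have hs := Real.sqrt_le_sqrt (show (1 - u) ^ 2 ≤ (1 - u) * (1 - θ) by nlinarith)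
      rw [Real.sqrt_sq (by linarith : (0:ℝ) ≤ 1 - u)] at hs
      nlinarith
  · -- y² ≤ u < y : unique solution θ = y²/u
    intro h1 h2 θ ⟨hθ0, hθ1⟩
    constructor
    · intro hG
      unfold triDGA at hG
      split_ifs at hG with huθ
      · have h3 : u * θ = y ^ 2 := sqrt_eq_of _ _ (by positivity) hG
        field_simp
        linarith [h3]
      · have hs := Real.sqrt_le_sqrt (show (1 - u) ^ 2 ≤ (1 - u) * (1 - θ) by nlinarith)
        rw [Real.sqrt_sq (by linarith : (0:ℝ) ≤ 1 - u)] at hs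
        linarith
    · intro hθ
      subst hθ
      unfold triDGA
      rw [if_pos (by rw [le_div_iff₀ hu0]; nlinarith)]
      rw [show u * (y ^ 2 / u) = y ^ 2 by field_simp]
      exact Real.sqrt_sq hy0.le
  · -- y ≤ u ≤ 1-(1-y)² : unique solution θ = 1-(1-y)²/(1-u)
    intro h1 h2 θ ⟨hθ0, hθ1⟩
    have h1u : (0 : ℝ) < 1 - u := by linarith
    constructor
    · intro hG
      unfold triDGA at hG
      split_ifs at hG with huθ
      · have h3 : u * θ = y ^ 2 := sqrt_eq_of _ _ (by positivity) hG
        -- θ = y²/u ≤ y ≤ u ≤ θ forces θ = u = y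
        have hθy : θ ≤ y := by nlinarith
        have huy : u = y := by nlinarith
        have hθu : θ = u := by nlinarith
        field_simp
        nlinarith
      · have h3 : Real.sqrt ((1 - u) * (1 - θ)) = 1 - y := by linarith
        have h4 : (1 - u) * (1 - θ) = (1 - y) ^ 2 :=
          sqrt_eq_of _ _ (by nlinarith) h3
        field_simp
        linarith [h4]
    · intro hθ
      subst hθ
      unfold triDGA
      by_cases huy : u ≤ 1 - (1 - y) ^ 2 / (1 - u)
      · rw [if_pos huy]
        have huy' : u = y := by
          have : u * (1 - u) ≤ (1 - u) - (1 - y) ^ 2 := by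
            have := (mul_le_mul_iff_of_pos_right h1u).mpr huy
            calc u * (1 - u) ≤ (1 - (1 - y) ^ 2 / (1 - u)) * (1 - u) := by linarith
              _ = (1 - u) - (1 - y) ^ 2 := by field_simp
          nlinarith
        rw [huy', show (1 - y) ^ 2 / (1 - y) = 1 - y by
              rw [div_eq_iff (by linarith : (1:ℝ) - y ≠ 0)]; ring,
            show y * (1 - (1 - y)) = y ^ 2 by ring]
        exact Real.sqrt_sq hy0.le
      · rw [if_neg huy]
        rw [show (1 - u) * (1 - (1 - (1 - y) ^ 2 / (1 - u))) = (1 - y) ^ 2 by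
          field_simp; ring]
        rw [Real.sqrt_sq (by linarith)]
        ring
  · -- u > 1-(1-y)² : no solution
    rintro h ⟨θ, ⟨hθ0, hθ1⟩, hG⟩
    have hyu : y < u := by nlinarith
    unfold triDGA at hG
    split_ifs at hG with huθ
    · have h3 : u * θ = y ^ 2 := sqrt_eq_of _ _ (by positivity) hG
      nlinarith
    · have h3 : Real.sqrt ((1 - u) * (1 - θ)) = 1 - y := by linarith
      have h4 : (1 - u) * (1 - θ) = (1 - y) ^ 2 :=
        sqrt_eq_of _ _ (by nlinarith) h3
      nlinarith
end

section
/- Let p ≥ 1, let a < b be reals, and let a < t₁ < t₂ < ⋯ < t_κ < b. Then the functions on [a,b] given by 1, x, …, x^p, (x−t₁)₊^p, …, (x−t_κ)₊^p, (x−t₁)₊^{p−1}, …, (x−t_κ)₊^{p−1} are linearly independent (as elements of the real vector space of functions on [a,b]); consequently, the free-knot spline Fisher information matrix I(η) = XᵀX built from these functions evaluated at design points is nonsingular whenever the design points make the columns of X linearly independent, which requires the knots t_j to be distinct and the coefficients α_{p+j} multiplying the knot derivatives to be nonzero. -/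
open Matrix
open Polynomial

lemma poly_zero_of_zero_on_Ioo (P : ℝ[X]) (u v : ℝ) (huv : u < v)
    (h : ∀ x ∈ Set.Ioo u v, P.eval x = 0) : P = 0 :=
  P.eq_zero_of_infinite_isRoot ((Set.Ioo_infinite huv).mono (fun x hx => h x hx))

lemma peel (τ A B : ℝ) (p : ℕ) (hp : 1 ≤ p)
    (h : C A * (X - C τ)^p + C B * (X - C τ)^(p-1) = (0 : ℝ[X])) : A = 0 ∧ B = 0 := by
  have h2 := congrArg (Polynomial.comp · (X + C τ)) h
  simp only [add_comp, mul_comp, pow_comp, sub_comp, X_comp, C_comp, zero_comp,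
    add_sub_cancel_right] at h2
  have hA := congrArg (Polynomial.coeff · p) h2
  have hB := congrArg (Polynomial.coeff · (p-1)) h2
  simp only [coeff_add, coeff_C_mul, coeff_X_pow, coeff_zero] at hA hB
  rw [if_pos trivial, if_neg (by omega : ¬ p = p - 1)] at hA
  rw [if_pos trivial, if_neg (by omega : ¬ p - 1 = p)] at hB
  constructor <;> linarith


/-- The truncated power functions `1, x, …, x^p, (x−t₁)₊^p, …, (x−t_κ)₊^p,
(x−t₁)₊^{p−1}, …, (x−t_κ)₊^{p−1}` (with the convention `(u)₊^0 = 1_{u>0}`) are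
linearly independent as functions on `[a,b]`; consequently, a Gram matrix `XᵀX`
built from linearly independent columns is nonsingular. -/
theorem freeKnotSpline_basis_linearIndependent
    (p : ℕ) (hp : 1 ≤ p) (a b : ℝ) (hab : a < b) (κ : ℕ) (t : Fin κ → ℝ)
    (ht : StrictMono t) (hta : ∀ k, a < t k) (htb : ∀ k, t k < b) :
    LinearIndependent ℝ (fun idx : Fin (p + 1) ⊕ Fin κ ⊕ Fin κ =>
      (fun x : Set.Icc a b =>
        Sum.elim (fun j : Fin (p + 1) => (x : ℝ) ^ (j : ℕ))
          (Sum.elim (fun k : Fin κ => (max ((x : ℝ) - t k) 0) ^ p)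
            (fun k : Fin κ => if t k < (x : ℝ) then ((x : ℝ) - t k) ^ (p - 1) else 0))
          idx))
    ∧ ∀ (n m : ℕ) (X : Matrix (Fin n) (Fin m) ℝ),
        LinearIndependent ℝ (fun j : Fin m => fun i : Fin n => X i j) →
        (X.transpose * X).det ≠ 0 := by
  constructor
  · rw [Fintype.linearIndependent_iff]
    intro c hc
    set A : Fin κ → ℝ := fun k => c (Sum.inr (Sum.inl k)) with hA
    set B : Fin κ → ℝ := fun k => c (Sum.inr (Sum.inr k)) with hB
    set P : ℝ[X] := ∑ j : Fin (p+1), monomial (j:ℕ) (c (Sum.inl j)) with hPdef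
    set Q : ℕ → ℝ[X] := fun k => P + ∑ i : Fin κ,
        if (i:ℕ) < k then C (A i) * (X - C (t i))^p + C (B i) * (X - C (t i))^(p-1) else 0
      with hQdef
    have hFx : ∀ x : ℝ, x ∈ Set.Icc a b →
        (∑ j : Fin (p+1), c (Sum.inl j) * x ^ (j:ℕ))
        + ((∑ i : Fin κ, A i * (max (x - t i) 0) ^ p)
        + ∑ i : Fin κ, (if t i < x then B i * (x - t i) ^ (p-1) else 0)) = 0 := by
      intro x hx
      have h1 := congrFun hc ⟨x, hx⟩
      simpa [Finset.sum_apply, Fintype.sum_sum_type, A, B, mul_ite] using h1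
    have heval : ∀ (k : ℕ) (x : ℝ), x ∈ Set.Icc a b →
        (∀ i : Fin κ, ((i:ℕ) < k ↔ t i < x)) → (Q k).eval x = 0 := by
      intro k x hx hiff
      rw [← hFx x hx]
      simp only [hQdef, hPdef, Polynomial.eval_add, Polynomial.eval_finset_sum,
        Polynomial.eval_monomial, apply_ite (Polynomial.eval x), Polynomial.eval_zero,
        Polynomial.eval_mul, Polynomial.eval_pow, Polynomial.eval_sub,
        Polynomial.eval_X, Polynomial.eval_C]
      congr 1
      rw [← Finset.sum_add_distrib]
      apply Finset.sum_congr rfl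
      intro i _
      by_cases hik : (i:ℕ) < k
      · have hti : t i < x := (hiff i).1 hik
        rw [if_pos hik, if_pos hti, max_eq_left (by linarith)]
      · have hti : ¬ t i < x := fun h => hik ((hiff i).2 h)
        rw [if_neg hik, if_neg hti, max_eq_right (by push_neg at hti; linarith),
          zero_pow (by omega), mul_zero, add_zero]
    have hQ0 : ∀ (k : ℕ) (u v : ℝ), u < v → a ≤ u → v ≤ b →
        (∀ x ∈ Set.Ioo u v, ∀ i : Fin κ, ((i:ℕ) < k ↔ t i < x)) → Q k = 0 := by
      intro k u v huv hau hvb hiff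
      refine poly_zero_of_zero_on_Ioo _ u v huv (fun x hx => heval k x ?_ (hiff x hx))
      exact ⟨le_trans hau hx.1.le, le_trans hx.2.le hvb⟩
    have hQ : ∀ k : ℕ, k ≤ κ → Q k = 0 := by
      intro k hk
      match k with
      | 0 =>
        by_cases h0 : 0 < κ
        · refine hQ0 0 a (t ⟨0, h0⟩) (hta _) le_rfl (htb _).le ?_
          intro x hx i
          constructor
          · omega
          · intro h
            exact absurd (lt_of_lt_of_le hx.2 (ht.monotone (by exact Fin.mk_le_of_le_val (Nat.zero_le _)))) (not_lt.2 h.le)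
        · refine hQ0 0 a b hab le_rfl le_rfl ?_
          intro x hx i
          exact absurd i.isLt (by omega)
      | (m+1) =>
        have hm : m < κ := hk
        by_cases hmk : m + 1 < κ
        · refine hQ0 (m+1) (t ⟨m, hm⟩) (t ⟨m+1, hmk⟩) (ht (by simp [Fin.lt_def])) (hta _).le (htb _).le ?_
          intro x hx i
          constructor
          · intro hi
            exact lt_of_le_of_lt (ht.monotone (by simpa [Fin.le_def] using Nat.lt_succ_iff.1 hi)) hx.1
          · intro hti
            by_contra hcon
            have : t ⟨m+1, hmk⟩ ≤ t i := ht.monotone (by simpa [Fin.le_def] using not_lt.1 hcon)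
            linarith [hx.2]
        · refine hQ0 (m+1) (t ⟨m, hm⟩) b (htb _) (hta _).le le_rfl ?_
          intro x hx i
          constructor
          · intro hi
            exact lt_of_le_of_lt (ht.monotone (by simpa [Fin.le_def] using Nat.lt_succ_iff.1 hi)) hx.1
          · intro _
            omega
    have hP : P = 0 := by simpa [hQdef] using hQ 0 (Nat.zero_le _)
    have hterm : ∀ k : Fin κ, A k = 0 ∧ B k = 0 := by
      intro k
      have h1 := hQ (k:ℕ) k.isLt.le
      have h2 := hQ ((k:ℕ)+1) k.isLt
      apply peel (t k) (A k) (B k) p hp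
      have hsub : Q ((k:ℕ)+1) - Q (k:ℕ)
          = C (A k) * (X - C (t k))^p + C (B k) * (X - C (t k))^(p-1) := by
        simp only [hQdef]
        have hPP : ∀ S1 S2 : ℝ[X], (P + S1) - (P + S2) = S1 - S2 := fun _ _ => by ring
        rw [hPP, ← Finset.sum_sub_distrib]
        have hcongr : ∀ (i : Fin κ), i ∈ Finset.univ → ((if (i:ℕ) < (k:ℕ)+1 then
              C (A i) * (X - C (t i))^p + C (B i) * (X - C (t i))^(p-1) else 0)
            - (if (i:ℕ) < (k:ℕ) then
              C (A i) * (X - C (t i))^p + C (B i) * (X - C (t i))^(p-1) else 0))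
            = if i = k then C (A i) * (X - C (t i))^p + C (B i) * (X - C (t i))^(p-1) else 0 := by
          intro i _
          by_cases hik : i = k
          · subst hik
            rw [if_pos (by omega), if_neg (by omega), if_pos rfl, sub_zero]
          · have hne : (i:ℕ) ≠ (k:ℕ) := fun h => hik (Fin.ext h)
            rw [if_neg hik]
            by_cases hlt : (i:ℕ) < (k:ℕ)
            · rw [if_pos (by omega), if_pos hlt, sub_self]
            · rw [if_neg (by omega), if_neg hlt, sub_self]
        rw [Finset.sum_congr rfl hcongr, Finset.sum_ite_eq' Finset.univ k, if_pos (Finset.mem_univ k)]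
      rw [← hsub, h2, h1, sub_zero]
    intro idx
    rcases idx with j | k | k
    · have hcj := congrArg (fun q => Polynomial.coeff q (j:ℕ)) hP
      simpa [hPdef, Polynomial.finset_sum_coeff, Polynomial.coeff_monomial,
        Fin.val_eq_val] using hcj
    · exact (hterm k).1
    · exact (hterm k).2
  · intro n m X h hdet
    obtain ⟨v, hv, hXv⟩ := (Matrix.exists_mulVec_eq_zero_iff).2 hdet
    have h0 : (X *ᵥ v) ⬝ᵥ (X *ᵥ v) = 0 := by
      have h1 := congrArg (fun w => v ⬝ᵥ w) hXv
      simpa [← Matrix.mulVec_mulVec, Matrix.dotProduct_mulVec, Matrix.vecMul_transpose] using h1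
    have hz : X *ᵥ v = 0 := dotProduct_self_eq_zero.1 h0
    apply hv
    refine funext (Fintype.linearIndependent_iff.1 h v ?_)
    funext i
    have hzi := congrFun hz i
    simp only [Matrix.mulVec, dotProduct] at hzi
    simpa [Finset.sum_apply, mul_comm] using hzi
end
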